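/- Suppose k > t ≥ 1 and a ≤ n are positive integers. Let H have the minimum number of edges among all (n,k,t)-graphs with independence number at most a. If α(H) < a, then H is not an (n, k-1, t)-graph, i.e., some set of k-1 vertices of H contains no clique on t vertices. -/

import Mathlib

open SimpleGraph

/-- `G` is a graph in which every set of `k` vertices contains a clique on `t` vertices. -/
def CliqueInEveryK {V : Type*} [DecidableEq V] (G : SimpleGraph V) (k t : ℕ) : Prop :=
  ∀ s : Finset V, s.card = k → ∃ c ⊆ s, G.IsNClique t c

/-- The independence number of `G`. -/
noncomputable def indepNum {V : Type*} (G : SimpleGraph V) : ℕ := Gᶜ.cliqueNum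

/-- The number of edges of `G`. -/
noncomputable def edgeCount {V : Type*} (G : SimpleGraph V) : ℕ := Nat.card G.edgeSet

lemma cliqueNum_le_of_forall {V : Type*} [Fintype V] (G : SimpleGraph V) (m : ℕ)
    (h : ∀ s : Finset V, G.IsClique s → s.card ≤ m) : G.cliqueNum ≤ m := by
  obtain ⟨s, hs⟩ := G.exists_isNClique_cliqueNum
  rw [← hs.card_eq]
  exact h s hs.isClique

/-- If `H` has the minimum number of edges among `(n,k,t)`-graphs with independence
number at most `a`, and `α(H) < a`, then `H` is not an `(n, k-1, t)`-graph. -/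
theorem stmt_4 {n k t a : ℕ} (hkt : t < k) (ht : 1 ≤ t) (ha : 1 ≤ a) (han : a ≤ n)
    (H : SimpleGraph (Fin n)) (hH : CliqueInEveryK H k t) (hHa : _root_.indepNum H ≤ a)
    (hmin : ∀ H' : SimpleGraph (Fin n),
      CliqueInEveryK H' k t → _root_.indepNum H' ≤ a → edgeCount H ≤ edgeCount H')
    (hlt : _root_.indepNum H < a) :
    ¬ CliqueInEveryK H (k - 1) t := by
  intro hK
  -- H has an edge
  obtain ⟨u, v, huv⟩ : ∃ u v, H.Adj u v := by
    by_contra hne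
    push_neg at hne
    -- then every set of size a is a clique in Hᶜ
    obtain ⟨s, -, hs⟩ := Finset.exists_subset_card_eq
      (show a ≤ (Finset.univ : Finset (Fin n)).card by simpa using han)
    have hclique : Hᶜ.IsClique (s : Set (Fin n)) := by
      intro x _ y _ hxy
      exact ⟨hxy, hne x y⟩
    have : a ≤ _root_.indepNum H := by
      have := hclique.card_le_cliqueNum
      rwa [hs] at this
    omega
  set G := H.deleteEdges {s(u, v)} with hG
  -- key fact: cliques in G avoiding issues
  have hGadj : ∀ x y, G.Adj x y ↔ H.Adj x y ∧ s(x, y) ≠ s(u, v) := by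
    intro x y; simp [hG]
  have hclique_lift : ∀ c : Finset (Fin n), H.IsClique c → u ∉ c → G.IsClique c := by
    intro c hc hu x hx y hy hxy
    refine (hGadj x y).2 ⟨hc hx hy hxy, ?_⟩
    intro heq
    rcases Sym2.eq_iff.mp heq with ⟨rfl, rfl⟩ | ⟨rfl, rfl⟩
    · exact hu hx
    · exact hu hy
  -- G is an (n,k,t)-graph
  have hGk : CliqueInEveryK G k t := by
    intro s hs
    by_cases hu : u ∈ s
    · obtain ⟨c, hcs, hc⟩ := hK (s.erase u) (by rw [Finset.card_erase_of_mem hu, hs])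
      refine ⟨c, hcs.trans (Finset.erase_subset _ _), hclique_lift c hc.isClique
        (fun h => (Finset.notMem_erase u s) (hcs h)), hc.card_eq⟩
    · obtain ⟨c, hcs, hc⟩ := hH s hs
      exact ⟨c, hcs, hclique_lift c hc.isClique (fun h => hu (hcs h)), hc.card_eq⟩
  -- indepNum G ≤ a
  have hGa : _root_.indepNum G ≤ a := by
    refine cliqueNum_le_of_forall _ a ?_
    intro w hw
    have herase : Hᶜ.IsClique ((w.erase u : Finset (Fin n)) : Set (Fin n)) := by
      intro x hx y hy hxy
      have hxw : x ∈ w := Finset.mem_of_mem_erase (by exact_mod_cast hx)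
      have hyw : y ∈ w := Finset.mem_of_mem_erase (by exact_mod_cast hy)
      have hxu : x ≠ u := Finset.ne_of_mem_erase (by exact_mod_cast hx)
      have hyu : y ≠ u := Finset.ne_of_mem_erase (by exact_mod_cast hy)
      have hGxy := hw hxw hyw hxy
      rw [compl_adj] at hGxy ⊢
      refine ⟨hxy, fun hH' => hGxy.2 ?_⟩
      refine (hGadj x y).2 ⟨hH', ?_⟩
      intro heq
      rcases Sym2.eq_iff.mp heq with ⟨rfl, rfl⟩ | ⟨rfl, rfl⟩
      · exact hxu rfl
      · exact hyu rfl
    have h1 : (w.erase u).card ≤ _root_.indepNum H := herase.card_le_cliqueNum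
    have h2 : w.card ≤ (w.erase u).card + 1 := by
      by_cases hu : u ∈ w
      · rw [Finset.card_erase_of_mem hu]; omega
      · rw [Finset.erase_eq_of_notMem hu]; omega
    omega
  -- strictly fewer edges
  have hlt' : edgeCount G < edgeCount H := by
    have hsub : G.edgeSet ⊂ H.edgeSet := by
      rw [hG, edgeSet_deleteEdges]
      refine (Set.ssubset_iff_of_subset Set.diff_subset).mpr ?_
      exact ⟨s(u, v), H.mem_edgeSet.mpr huv, by simp⟩
    have hfin : H.edgeSet.Finite := Set.toFinite _
    have := Set.ncard_lt_ncard hsub hfin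
    simpa [edgeCount, Nat.card_coe_set_eq] using this
  exact absurd (hmin G hGk hGa) (by omega)
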